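/- Let $\mathcal{C} \subseteq (S^2)^n$ be a vector trifferent code. For $x, y \in \mathcal{C}$ define $A(x,y) = |\{i \in [n] : \langle x_i, y_i \rangle \neq 0\}|$. Then $\sum_{\{x,y\} \in \binom{\mathcal{C}}{2}} 2^{A(x,y)} \le 3^n$. -/

import Mathlib

open scoped RealInnerProductSpace

/-- A vector trifferent code of block length `n`: a finite set of words whose letters are
unit vectors of `ℝ³`, such that any three distinct codewords have a coordinate where the
three letters are mutually orthogonal. -/
def VectorTrifferent (n : ℕ) (C : Finset (Fin n → EuclideanSpace ℝ (Fin 3))) : Prop :=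
  (∀ x ∈ C, ∀ i, ‖x i‖ = 1) ∧
  ∀ x ∈ C, ∀ y ∈ C, ∀ z ∈ C, x ≠ y → x ≠ z → y ≠ z →
    ∃ i, ⟪x i, y i⟫ = 0 ∧ ⟪x i, z i⟫ = 0 ∧ ⟪y i, z i⟫ = 0

noncomputable section AuxVectorTrifference

open Finset Module Submodule

abbrev E3 := EuclideanSpace ℝ (Fin 3)

lemma finrank_E3 : finrank ℝ E3 = 3 := by simp [finrank_euclideanSpace]

lemma exists_unit_perp (a b : E3) : ∃ m : E3, ‖m‖ = 1 ∧ ⟪a, m⟫ = 0 ∧ ⟪b, m⟫ = 0 := by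
  have hspanle : finrank ℝ (span ℝ ({a, b} : Set E3)) ≤ 2 := by
    have h1 : ({a, b} : Set E3) = Set.range ![a, b] := by
      ext x
      simp [Fin.exists_fin_two]; tauto
    have := finrank_range_le_card (R := ℝ) ![a, b]
    rw [h1]
    simpa [Set.finrank] using this
  have hne : (span ℝ ({a, b} : Set E3))ᗮ ≠ ⊥ := by
    intro h
    have htop : span ℝ ({a, b} : Set E3) = ⊤ := by
      rwa [Submodule.orthogonal_eq_bot_iff] at h
    rw [htop] at hspanle
    rw [finrank_top, finrank_E3] at hspanle
    omega
  obtain ⟨v, hv, hv0⟩ := Submodule.exists_mem_ne_zero_of_ne_bot hne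
  have hva : ⟪a, v⟫ = 0 := (Submodule.mem_orthogonal _ v).1 hv a (subset_span (by simp))
  have hvb : ⟪b, v⟫ = 0 := (Submodule.mem_orthogonal _ v).1 hv b (subset_span (by simp))
  have hnv : ‖v‖ ≠ 0 := norm_ne_zero_iff.2 hv0
  refine ⟨‖v‖⁻¹ • v, ?_, ?_, ?_⟩
  · rw [norm_smul]
    simp [hnv]
  · rw [inner_smul_right]
    simp [hva]
  · rw [inner_smul_right]
    simp [hvb]

/-- chosen unit vector orthogonal to `a` and `b`. -/
def uperp (a b : E3) : E3 := Classical.choose (exists_unit_perp a b)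

lemma uperp_norm (a b : E3) : ‖uperp a b‖ = 1 := (Classical.choose_spec (exists_unit_perp a b)).1
lemma uperp_perp_left (a b : E3) : ⟪a, uperp a b⟫ = 0 :=
  (Classical.choose_spec (exists_unit_perp a b)).2.1
lemma uperp_perp_right (a b : E3) : ⟪b, uperp a b⟫ = 0 :=
  (Classical.choose_spec (exists_unit_perp a b)).2.2

/-- orthonormal pair orthogonal to `a`. -/
def pp1 (a : E3) : E3 := uperp a 0
def pp2 (a : E3) : E3 := uperp a (pp1 a)

lemma pp1_norm (a : E3) : ‖pp1 a‖ = 1 := uperp_norm _ _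
lemma pp2_norm (a : E3) : ‖pp2 a‖ = 1 := uperp_norm _ _
lemma pp1_perp (a : E3) : ⟪a, pp1 a⟫ = 0 := uperp_perp_left _ _
lemma pp2_perp (a : E3) : ⟪a, pp2 a⟫ = 0 := uperp_perp_left _ _
lemma pp1_pp2 (a : E3) : ⟪pp1 a, pp2 a⟫ = 0 := uperp_perp_right _ _


/-- If `x, y, z` is an orthonormal triple in `ℝ³`, `m` is orthogonal to `x` and `y`,
and `w` is orthogonal to `z`, then `m ⊥ w`. -/
lemma keyL {x y z m w : E3} (hx : ‖x‖ = 1) (hy : ‖y‖ = 1) (hz : ‖z‖ = 1)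
    (hxy : ⟪x, y⟫ = 0) (hxz : ⟪x, z⟫ = 0) (hyz : ⟪y, z⟫ = 0)
    (hmx : ⟪x, m⟫ = 0) (hmy : ⟪y, m⟫ = 0) (hw : ⟪z, w⟫ = 0) :
    ⟪m, w⟫ = 0 := by
  have hzz : ⟪z, z⟫ = (1 : ℝ) := by
    rw [real_inner_self_eq_norm_mul_norm, hz]; norm_num
  set u : E3 := m - ⟪z, m⟫ • z with hu
  have hux : ⟪x, u⟫ = 0 := by
    simp [hu, inner_sub_right, inner_smul_right, hxz, hmx]
  have huy : ⟪y, u⟫ = 0 := by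
    simp [hu, inner_sub_right, inner_smul_right, hyz, hmy]
  have huz : ⟪z, u⟫ = 0 := by
    simp [hu, inner_sub_right, inner_smul_right, hzz, hz]
  have hu0 : u = 0 := by
    by_contra h0
    have hnu : ‖u‖ ≠ 0 := norm_ne_zero_iff.2 h0
    set v : E3 := ‖u‖⁻¹ • u with hv
    have hvx : ⟪x, v⟫ = 0 := by rw [hv, inner_smul_right, hux]; ring
    have hvy : ⟪y, v⟫ = 0 := by rw [hv, inner_smul_right, huy]; ring
    have hvz : ⟪z, v⟫ = 0 := by rw [hv, inner_smul_right, huz]; ring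
    have hvv : ‖v‖ = 1 := by rw [hv, norm_smul]; simp [hnu]
    have hon : Orthonormal ℝ ![x, y, z, v] := by
      rw [orthonormal_iff_ite]
      intro i j
      have nx : ⟪x, x⟫ = (1:ℝ) := by rw [real_inner_self_eq_norm_mul_norm, hx]; norm_num
      have ny : ⟪y, y⟫ = (1:ℝ) := by rw [real_inner_self_eq_norm_mul_norm, hy]; norm_num
      have nv : ⟪v, v⟫ = (1:ℝ) := by rw [real_inner_self_eq_norm_mul_norm, hvv]; norm_num
      have hyx : ⟪y, x⟫ = 0 := by rw [real_inner_comm]; exact hxy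
      have hzx : ⟪z, x⟫ = 0 := by rw [real_inner_comm]; exact hxz
      have hzy : ⟪z, y⟫ = 0 := by rw [real_inner_comm]; exact hyz
      have hvx' : ⟪v, x⟫ = 0 := by rw [real_inner_comm]; exact hvx
      have hvy' : ⟪v, y⟫ = 0 := by rw [real_inner_comm]; exact hvy
      have hvz' : ⟪v, z⟫ = 0 := by rw [real_inner_comm]; exact hvz
      fin_cases i <;> fin_cases j <;>
        simp [hx, hy, hz, hvv, nx, ny, nv, hzz, hxy, hxz, hyz, hyx, hzx, hzy, hvx, hvy, hvz, hvx', hvy', hvz']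
    have hcard := hon.linearIndependent.fintype_card_le_finrank
    rw [finrank_E3] at hcard
    simp at hcard
  have hm : m = ⟪z, m⟫ • z := by
    have := sub_eq_zero.1 hu0
    exact this
  rw [hm, real_inner_smul_left, hw]
  ring


open Classical in
/-- the letter of the tensor vector of pair `(x,y)`, choice set `S`, at coordinate `i`. -/
def letter {n : ℕ} (x y : Fin n → E3) (S : Finset (Fin n)) (i : Fin n) : E3 :=
  if ⟪x i, y i⟫ = (0 : ℝ) then uperp (x i) (y i)
  else if i ∈ S then pp1 (x i) else pp2 (x i)

/-- the tensor vector of pair `(x,y)` with choice set `S`. -/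
def vecf {n : ℕ} (x y : Fin n → E3) (S : Finset (Fin n)) :
    EuclideanSpace ℝ (Fin n → Fin 3) :=
  WithLp.toLp 2 (fun g : Fin n → Fin 3 => ∏ i, letter x y S i (g i))

lemma letter_norm {n : ℕ} (x y : Fin n → E3) (S : Finset (Fin n)) (i : Fin n) :
    ‖letter x y S i‖ = 1 := by
  unfold letter
  split_ifs <;> simp [uperp_norm, pp1_norm, pp2_norm]

lemma letter_perp_fst {n : ℕ} (x y : Fin n → E3) (S : Finset (Fin n)) (i : Fin n) :
    ⟪x i, letter x y S i⟫ = 0 := by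
  unfold letter
  split_ifs
  · exact uperp_perp_left _ _
  · exact pp1_perp _
  · exact pp2_perp _

lemma letter_perp_snd {n : ℕ} (x y : Fin n → E3) (S : Finset (Fin n)) (i : Fin n)
    (h : ⟪x i, y i⟫ = 0) : ⟪y i, letter x y S i⟫ = 0 := by
  unfold letter
  rw [if_pos h]
  exact uperp_perp_right _ _

lemma inner_vecf {n : ℕ} (x y u v : Fin n → E3) (S T : Finset (Fin n)) :
    ⟪vecf x y S, vecf u v T⟫ = ∏ i, ⟪letter x y S i, letter u v T i⟫ := by
  have h1 : ⟪vecf x y S, vecf u v T⟫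
      = ∑ g : Fin n → Fin 3, ∏ i, (letter x y S i (g i) * letter u v T i (g i)) := by
    rw [PiLp.inner_apply]
    congr 1
    ext g
    rw [RCLike.inner_apply]
    simp only [conj_trivial, vecf, PiLp.toLp_apply]
    rw [← Finset.prod_mul_distrib]
    simp only [mul_comm]
  rw [h1]
  have h2 : ∀ i : Fin n, ⟪letter x y S i, letter u v T i⟫
      = ∑ j : Fin 3, letter x y S i j * letter u v T i j := by
    intro i
    rw [PiLp.inner_apply]
    simp [RCLike.inner_apply, mul_comm]
  simp only [h2]
  rw [Finset.prod_univ_sum]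
  rfl


theorem key_bound (n : ℕ) [DecidableEq (Fin n → EuclideanSpace ℝ (Fin 3))]
    (C : Finset (Fin n → EuclideanSpace ℝ (Fin 3)))
    (hC : VectorTrifferent n C)
    (P : Finset ((Fin n → E3) × (Fin n → E3)))
    (hPsub : P ⊆ C.offDiag)
    (hPasym : ∀ p ∈ P, ∀ q ∈ P, p.1 = q.2 → p.2 = q.1 → p = q) :
    ∑ p ∈ P, 2 ^ (Finset.univ.filter fun i => ⟪p.1 i, p.2 i⟫ ≠ (0:ℝ)).card ≤ 3 ^ n := by
  classical
  set Ag : ((Fin n → E3) × (Fin n → E3)) → Finset (Fin n) :=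
    fun p => Finset.univ.filter fun i => ⟪p.1 i, p.2 i⟫ ≠ (0:ℝ) with hAg
  set D := P.sigma (fun p => (Ag p).powerset) with hD
  set F : ↥D → EuclideanSpace ℝ (Fin n → Fin 3) :=
    fun a => vecf a.val.1.1 a.val.1.2 a.val.2 with hF
  have hon : Orthonormal ℝ F := by
    rw [orthonormal_iff_ite]
    rintro ⟨⟨p, S⟩, ha⟩ ⟨⟨q, T⟩, hb⟩
    have ha' := ha
    have hb' := hb
    rw [hD, Finset.mem_sigma, Finset.mem_powerset] at ha' hb'
    obtain ⟨hp, hS⟩ := ha'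
    obtain ⟨hq, hT⟩ := hb'
    by_cases hpq : p = q
    · subst hpq
      by_cases hST : S = T
      · subst hST
        rw [if_pos (Subtype.ext rfl)]
        show ⟪vecf p.1 p.2 S, vecf p.1 p.2 S⟫ = 1
        rw [inner_vecf]
        apply Finset.prod_eq_one
        intro i _
        rw [real_inner_self_eq_norm_mul_norm, letter_norm]
        norm_num
      · rw [if_neg (by intro h; exact hST (congrArg (fun z : ↥D => z.val.2) h))]
        show ⟪vecf p.1 p.2 S, vecf p.1 p.2 T⟫ = 0
        rw [inner_vecf]
        have hex : ∃ i, (i ∈ S ∧ i ∉ T) ∨ (i ∈ T ∧ i ∉ S) := by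
          by_contra hcon
          push_neg at hcon
          exact hST (Finset.ext fun i => ⟨(hcon i).1, (hcon i).2⟩)
        obtain ⟨i, hi⟩ := hex
        apply Finset.prod_eq_zero (Finset.mem_univ i)
        have hiAg : ⟪p.1 i, p.2 i⟫ ≠ (0:ℝ) := by
          rcases hi with ⟨h1, _⟩ | ⟨h1, _⟩
          · have := hS h1
            rw [hAg, Finset.mem_filter] at this
            exact this.2
          · have := hT h1
            rw [hAg, Finset.mem_filter] at this
            exact this.2
        rcases hi with ⟨h1, h2⟩ | ⟨h1, h2⟩
        · unfold letter
          rw [if_neg hiAg, if_neg hiAg, if_pos h1, if_neg h2]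
          exact pp1_pp2 _
        · unfold letter
          rw [if_neg hiAg, if_neg hiAg, if_neg h2, if_pos h1]
          rw [real_inner_comm]
          exact pp1_pp2 _
    · rw [if_neg (by intro h; exact hpq (congrArg (fun z : ↥D => z.val.1) h))]
      show ⟪vecf p.1 p.2 S, vecf q.1 q.2 T⟫ = 0
      -- geometric case
      have hpo := hPsub hp
      have hqo := hPsub hq
      rw [Finset.mem_offDiag] at hpo hqo
      obtain ⟨hxC, hyC, hxy⟩ := hpo
      obtain ⟨huC, hvC, huv⟩ := hqo
      set x := p.1; set y := p.2; set u := q.1; set v := q.2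
      set c : Fin n → E3 := if u = x ∨ u = y then v else u with hc
      have hcC : c ∈ C := by
        rw [hc]; split_ifs <;> assumption
      have hkey : (c = u) ∨ (c = v ∧ (u = x ∨ u = y)) := by
        rw [hc]; split_ifs with h
        · exact Or.inr ⟨rfl, h⟩
        · exact Or.inl rfl
      have hcx : c ≠ x := by
        rw [hc]; split_ifs with h
        · intro hvx
          rcases h with h | h
          · exact huv (h.trans hvx.symm)
          · exact hpq (hPasym p hp q hq hvx.symm h.symm)
        · intro hux
          exact h (Or.inl hux)
      have hcy : c ≠ y := by
        rw [hc]; split_ifs with h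
        · intro hvy
          rcases h with h | h
          · exact hpq (Prod.ext h.symm hvy.symm)
          · exact huv (h.trans hvy.symm)
        · intro huy
          exact h (Or.inr huy)
      obtain ⟨i, h1, h2, h3⟩ := hC.2 x hxC y hyC c hcC hxy (Ne.symm hcx) (Ne.symm hcy)
      rw [inner_vecf]
      apply Finset.prod_eq_zero (Finset.mem_univ i)
      have hqperp : ⟪c i, letter u v T i⟫ = 0 := by
        rcases hkey with hcu | ⟨hcv, hor⟩
        · rw [hcu]
          exact letter_perp_fst u v T i
        · have hdis : ⟪u i, v i⟫ = 0 := by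
            rcases hor with h | h
            · rw [h, ← hcv]; exact h2
            · rw [h, ← hcv]; exact h3
          rw [hcv]
          exact letter_perp_snd u v T i hdis
      have hpl : letter x y S i = uperp (x i) (y i) := by
        unfold letter
        rw [if_pos h1]
      rw [hpl]
      exact keyL (hC.1 x hxC i) (hC.1 y hyC i) (hC.1 c hcC i) h1 h2 h3
        (uperp_perp_left _ _) (uperp_perp_right _ _) hqperp
  have hcard := hon.linearIndependent.fintype_card_le_finrank
  rw [finrank_euclideanSpace, Fintype.card_coe] at hcard
  have h3n : Fintype.card (Fin n → Fin 3) = 3 ^ n := by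
    rw [Fintype.card_fun]
    simp
  rw [h3n] at hcard
  calc ∑ p ∈ P, 2 ^ (Finset.univ.filter fun i => ⟪p.1 i, p.2 i⟫ ≠ (0:ℝ)).card
      = D.card := by
        rw [hD, Finset.card_sigma]
        apply Finset.sum_congr rfl
        intro p _
        rw [Finset.card_powerset]
    _ ≤ 3 ^ n := hcard



end AuxVectorTrifference

theorem sum_two_pow_A_le (n : ℕ) [DecidableEq (Fin n → EuclideanSpace ℝ (Fin 3))]
    (C : Finset (Fin n → EuclideanSpace ℝ (Fin 3)))
    (hC : VectorTrifferent n C) :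
    (∑ p ∈ C.offDiag, (2 : ℝ) ^ (Nat.card {i : Fin n // ⟪p.1 i, p.2 i⟫ ≠ 0})) / 2
      ≤ 3 ^ n := by
  classical
  set f : (Fin n → E3) × (Fin n → E3) → ℝ :=
    fun p => (2:ℝ) ^ (Finset.univ.filter fun i => ⟪p.1 i, p.2 i⟫ ≠ (0:ℝ)).card with hf
  have hfeq : ∀ p ∈ C.offDiag,
      (2:ℝ) ^ (Nat.card {i : Fin n // ⟪p.1 i, p.2 i⟫ ≠ 0}) = f p := by
    intro p _
    rw [hf]
    congr 1
    simp [Nat.card_eq_fintype_card, Fintype.card_subtype]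
  rw [Finset.sum_congr rfl hfeq]
  have hwo : IsWellOrder (Fin n → E3) WellOrderingRel := WellOrderingRel.isWellOrder
  set r : (Fin n → E3) → (Fin n → E3) → Prop := WellOrderingRel with hr
  have hasymm : ∀ a b : (Fin n → E3), r a b → ¬ r b a := fun a b =>
    hwo.toIsWellFounded.wf.asymmetric a b
  have htri : ∀ a b : (Fin n → E3), a ≠ b → ¬ r a b → r b a := by
    intro a b hab h
    rcases (haveI := hwo; trichotomous (r := r) a b) with h1 | h1 | h1
    · exact absurd h1 h
    · exact absurd h1 hab
    · exact h1
  set P := C.offDiag.filter (fun p => r p.1 p.2) with hP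
  set P' := C.offDiag.filter (fun p => ¬ r p.1 p.2) with hP'
  have hsplit : ∑ p ∈ C.offDiag, f p = ∑ p ∈ P, f p + ∑ p ∈ P', f p :=
    (Finset.sum_filter_add_sum_filter_not _ _ _).symm
  have hsymm : ∀ a b : Fin n → E3, f (a, b) = f (b, a) := by
    intro a b
    have hfil : (Finset.univ.filter fun i => ⟪a i, b i⟫ ≠ (0:ℝ))
        = (Finset.univ.filter fun i => ⟪b i, a i⟫ ≠ (0:ℝ)) := by
      apply Finset.filter_congr
      intro i _
      simp only [ne_eq]
      rw [real_inner_comm]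
    show (2:ℝ) ^ (Finset.univ.filter fun i => ⟪a i, b i⟫ ≠ (0:ℝ)).card
        = (2:ℝ) ^ (Finset.univ.filter fun i => ⟪b i, a i⟫ ≠ (0:ℝ)).card
    rw [hfil]
  have hswap : ∑ p ∈ P', f p = ∑ p ∈ P, f p := by
    apply Finset.sum_nbij' (i := fun p : (Fin n → E3) × (Fin n → E3) => (p.2, p.1))
      (j := fun p : (Fin n → E3) × (Fin n → E3) => (p.2, p.1))
    · intro a ha
      rw [hP', Finset.mem_filter, Finset.mem_offDiag] at ha
      rw [hP, Finset.mem_filter, Finset.mem_offDiag]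
      exact ⟨⟨ha.1.2.1, ha.1.1, (ha.1.2.2).symm⟩, htri _ _ ha.1.2.2 ha.2⟩
    · intro a ha
      rw [hP, Finset.mem_filter, Finset.mem_offDiag] at ha
      rw [hP', Finset.mem_filter, Finset.mem_offDiag]
      exact ⟨⟨ha.1.2.1, ha.1.1, (ha.1.2.2).symm⟩, hasymm _ _ ha.2⟩
    · intro a _; rfl
    · intro a _; rfl
    · intro a _
      exact hsymm a.1 a.2
  have hPsub : P ⊆ C.offDiag := Finset.filter_subset _ _
  have hPasym : ∀ p ∈ P, ∀ q ∈ P, p.1 = q.2 → p.2 = q.1 → p = q := by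
    intro p hp q hq h1 h2
    rw [hP, Finset.mem_filter] at hp hq
    exfalso
    apply hasymm p.1 p.2 hp.2
    rw [h1, h2]
    exact hq.2
  have hkey := key_bound n C hC P hPsub hPasym
  have hcast : ∑ p ∈ P, f p
      = ((∑ p ∈ P, 2 ^ (Finset.univ.filter fun i => ⟪p.1 i, p.2 i⟫ ≠ (0:ℝ)).card : ℕ) : ℝ) := by
    rw [hf]
    push_cast
    rfl
  have hle : ∑ p ∈ P, f p ≤ 3 ^ n := by
    rw [hcast]
    calc ((∑ p ∈ P, 2 ^ (Finset.univ.filter fun i => ⟪p.1 i, p.2 i⟫ ≠ (0:ℝ)).card : ℕ) : ℝ)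
        ≤ ((3 ^ n : ℕ) : ℝ) := Nat.cast_le.mpr hkey
      _ = 3 ^ n := by push_cast; ring
  rw [hsplit, hswap]
  linarith
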